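/- Let X be a real Hilbert space and J : X → ℝ continuously differentiable with compact derivative. Define Ψ(x) = ½‖x‖² − J(x) and assume for some r > inf_X Ψ the set Ψ^{-1}((-∞,r)) is bounded. Then the set Ψ^{-1}(inf_X Ψ) of global minimizers of Ψ is compact. -/

import Mathlib

/-- Proposition 2 of the paper: let `X` be a real Hilbert space, `J : X → ℝ` continuously
differentiable with compact gradient `J'`, and `Ψ x = ½‖x‖² − J x`. If for some
`r > inf Ψ` the sublevel set `Ψ⁻¹((-∞, r))` is bounded, then the set of global
minimizers of `Ψ` is compact. -/
theorem stmt_9 {X : Type*} [NormedAddCommGroup X] [InnerProductSpace ℝ X] [CompleteSpace X]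
    (J : X → ℝ) (J' : X → X) (hgrad : ∀ x, HasGradientAt J (J' x) x)
    (hcont : Continuous J')
    (hcompact : ∀ s : Set X, Bornology.IsBounded s → IsCompact (closure (J' '' s)))
    (Ψ : X → ℝ) (hΨ : ∀ x, Ψ x = (1 / 2 : ℝ) * ‖x‖ ^ 2 - J x)
    (r : ℝ) (hr : ∃ x, Ψ x < r) (hbdd : Bornology.IsBounded {x | Ψ x < r}) :
    IsCompact {x | ∀ y, Ψ x ≤ Ψ y} := by
  set m : Set X := {x | ∀ y, Ψ x ≤ Ψ y} with hm
  -- Ψ in terms of inner product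
  have hΨfun : Ψ = fun y => (1 / 2 : ℝ) * (inner ℝ y y : ℝ) - J y := by
    funext y
    rw [hΨ, real_inner_self_eq_norm_sq]
  -- J is continuous
  have hJcont : Continuous J := by
    rw [continuous_iff_continuousAt]
    exact fun x => (hgrad x).differentiableAt.continuousAt
  have hΨcont : Continuous Ψ := by
    rw [hΨfun]
    exact (continuous_const.mul (continuous_id.inner continuous_id)).sub hJcont
  -- m is closed
  have hclosed : IsClosed m := by
    have : m = ⋂ y, {x | Ψ x ≤ Ψ y} := by
      ext x; simp [hm, Set.mem_iInter]
    rw [this]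
    exact isClosed_iInter fun y => isClosed_le hΨcont continuous_const
  -- m is bounded
  obtain ⟨x₀, hx₀⟩ := hr
  have hmbdd : Bornology.IsBounded m := by
    apply hbdd.subset
    intro x hx
    exact lt_of_le_of_lt (hx x₀) hx₀
  -- every minimizer is a fixed point of J'
  have hfix : ∀ x ∈ m, J' x = x := by
    intro x hx
    have hmin : IsLocalMin Ψ x := Filter.Eventually.of_forall hx
    have h1 : HasFDerivAt (fun y : X => (inner ℝ y y : ℝ))
        ((fderivInnerCLM ℝ (x, x)).comp
          ((ContinuousLinearMap.id ℝ X).prod (ContinuousLinearMap.id ℝ X))) x :=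
      (hasFDerivAt_id x).inner ℝ (hasFDerivAt_id x)
    have hD : HasFDerivAt Ψ
        ((1 / 2 : ℝ) • ((fderivInnerCLM ℝ (x, x)).comp
            ((ContinuousLinearMap.id ℝ X).prod (ContinuousLinearMap.id ℝ X)))
          - InnerProductSpace.toDual ℝ X (J' x)) x := by
      rw [hΨfun]
      exact (h1.const_smul (1 / 2 : ℝ)).sub (hgrad x).hasFDerivAt
    have hzero := hmin.hasFDerivAt_eq_zero hD
    have hv := congrFun (congrArg (DFunLike.coe) hzero) (x - J' x)
    simp only [ContinuousLinearMap.sub_apply, ContinuousLinearMap.smul_apply,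
      ContinuousLinearMap.comp_apply, ContinuousLinearMap.prod_apply,
      ContinuousLinearMap.coe_id', id_eq, fderivInnerCLM_apply,
      InnerProductSpace.toDual_apply_apply, ContinuousLinearMap.zero_apply, smul_eq_mul] at hv
    have hv' : (inner ℝ (x - J' x) (x - J' x) : ℝ) = 0 := by
      rw [inner_sub_left]
      have hcomm : (inner ℝ (x - J' x) x : ℝ) = inner ℝ x (x - J' x) := real_inner_comm _ _
      nlinarith [hv, hcomm]
    have : x - J' x = 0 := by rwa [inner_self_eq_zero] at hv'
    exact (sub_eq_zero.mp this).symm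
  exact IsCompact.of_isClosed_subset (hcompact m hmbdd) hclosed
    (fun x hx => subset_closure ⟨x, hx, hfix x hx⟩)
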